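/- For fixed n ∈ ℕ, d ∈ ℕ, ν ≥ 0 and β > 0, the coefficients ω_n(ν,μ) := Γ(2ν+2n+d) Γ(μ+2ν+1) Γ(ν) δ_{ν,μ,β}^{2n+d} / (n! Γ(2ν) Γ(μ+2ν+2n+d+1) Γ(ν+d/2+n)) satisfy lim_{μ→∞} ω_n(ν,μ) = 2^{d+2n} Γ((d+1)/2 + ν) ((d+1)/2 + ν)_n β^{d+2n} / (n! Γ(ν + 1/2)), for ν > 0. -/

import Mathlib

open Real Filter

/-- The rescaled compact support parameter of the reparametrized generalized Wendland model. -/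
noncomputable def gwDelta (ν μ β : ℝ) : ℝ :=
  β * (Real.Gamma (μ + 2 * ν + 1) / Real.Gamma μ) ^ (1 / (1 + 2 * ν))


/-- Gautschi-type squeeze: base case `s ∈ (0,1)`. -/
lemma gamma_ratio_base {s : ℝ} (hs : 0 < s) (hs1 : s < 1) :
    Tendsto (fun x : ℝ => Real.Gamma (x + s) / (Real.Gamma x * x ^ s)) atTop (nhds 1) := by
  have hlow : Tendsto (fun x : ℝ => (x / (x + s)) ^ (1 - s)) atTop (nhds 1) := by
    have h1 : Tendsto (fun x : ℝ => x / (x + s)) atTop (nhds 1) := by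
      have h2 : Tendsto (fun x : ℝ => 1 - s / (x + s)) atTop (nhds 1) := by
        have := Tendsto.div_atTop (tendsto_const_nhds (x := s))
          (tendsto_atTop_add_const_right atTop s tendsto_id)
        simpa using tendsto_const_nhds.sub this
      refine h2.congr' ?_
      filter_upwards [eventually_gt_atTop 0] with x hx
      have : x + s ≠ 0 := by positivity
      field_simp
      ring
    simpa using h1.rpow_const (Or.inl one_ne_zero)
  refine tendsto_of_tendsto_of_tendsto_of_le_of_le' hlow tendsto_const_nhds ?_ ?_
  · -- lower bound
    filter_upwards [eventually_gt_atTop 0] with x hx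
    have hG : 0 < Real.Gamma x := Real.Gamma_pos_of_pos hx
    have hxs : 0 < x + s := by positivity
    have hGs : 0 < Real.Gamma (x + s) := Real.Gamma_pos_of_pos hxs
    have key : Real.Gamma x * x ≤ Real.Gamma (x + s) * (x + s) ^ (1 - s) := by
      have h := Real.Gamma_mul_add_mul_le_rpow_Gamma_mul_rpow_Gamma (s := x+s)
        (t := x+s+1) (a := s) (b := 1-s) hxs (by positivity) hs (by linarith) (by ring)
      have harg : s * (x + s) + (1 - s) * (x + s + 1) = x + 1 := by ring
      rw [harg, Real.Gamma_add_one hx.ne', Real.Gamma_add_one hxs.ne'] at h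
      calc Real.Gamma x * x = x * Real.Gamma x := by ring
        _ ≤ Real.Gamma (x+s) ^ s * ((x + s) * Real.Gamma (x+s)) ^ (1-s) := h
        _ = (Real.Gamma (x+s) ^ s * Real.Gamma (x+s) ^ (1-s)) * (x + s) ^ (1 - s) := by
            rw [Real.mul_rpow hxs.le hGs.le]; ring
        _ = Real.Gamma (x + s) * (x + s) ^ (1 - s) := by
            rw [← Real.rpow_add hGs]; norm_num
    rw [Real.div_rpow hx.le hxs.le, div_le_div_iff₀ (by positivity) (by positivity)]
    calc x ^ (1 - s) * (Real.Gamma x * x ^ s)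
        = Real.Gamma x * (x ^ (1-s) * x ^ s) := by ring
      _ = (Real.Gamma x * x) * 1 := by rw [← Real.rpow_add hx]; norm_num
      _ ≤ Real.Gamma (x + s) * (x + s) ^ (1 - s) := by rw [mul_one]; exact key
  · -- upper bound
    filter_upwards [eventually_gt_atTop 0] with x hx
    have hG : 0 < Real.Gamma x := Real.Gamma_pos_of_pos hx
    have h := Real.Gamma_mul_add_mul_le_rpow_Gamma_mul_rpow_Gamma (s := x)
      (t := x+1) (a := 1-s) (b := s) hx (by positivity) (by linarith) hs (by ring)
    have harg : (1 - s) * x + s * (x + 1) = x + s := by ring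
    rw [harg, Real.Gamma_add_one hx.ne'] at h
    have h2 : Real.Gamma x ^ (1-s) * (x * Real.Gamma x) ^ s = Real.Gamma x * x ^ s := by
      rw [Real.mul_rpow hx.le hG.le, mul_comm (x ^ s), ← mul_assoc, ← Real.rpow_add hG]
      norm_num
    rw [div_le_one (by positivity)]
    calc Real.Gamma (x + s) ≤ _ := h
      _ = Real.Gamma x * x ^ s := h2

lemma gamma_ratio_step {a : ℝ} (ha : 0 ≤ a)
    (h : Tendsto (fun x : ℝ => Real.Gamma (x + a) / (Real.Gamma x * x ^ a)) atTop (nhds 1)) :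
    Tendsto (fun x : ℝ => Real.Gamma (x + (a + 1)) / (Real.Gamma x * x ^ (a + 1)))
      atTop (nhds 1) := by
  have h2 : Tendsto (fun x : ℝ => (x + a) / x) atTop (nhds 1) := by
    have hd : Tendsto (fun x : ℝ => 1 + a / x) atTop (nhds 1) := by
      have := Tendsto.div_atTop (tendsto_const_nhds (x := a)) tendsto_id
      simpa using ((tendsto_const_nhds : Tendsto (fun _ : ℝ => (1:ℝ)) atTop _).add this)
    refine hd.congr' ?_
    filter_upwards [eventually_gt_atTop 0] with x hx
    field_simp
  have := h.mul h2
  rw [mul_one] at this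
  refine this.congr' ?_
  filter_upwards [eventually_gt_atTop 0, eventually_gt_atTop (-a)] with x hx hx2
  have hxa : (0:ℝ) < x + a := by linarith
  rw [show x + (a + 1) = (x + a) + 1 by ring, Real.Gamma_add_one hxa.ne',
    Real.rpow_add hx, Real.rpow_one]
  have hG : Real.Gamma x ≠ 0 := (Real.Gamma_pos_of_pos hx).ne'
  have hxs : x ^ a ≠ 0 := (Real.rpow_pos_of_pos hx a).ne'
  field_simp

lemma gamma_ratio_tendsto {a : ℝ} (ha : 0 ≤ a) :
    Tendsto (fun x : ℝ => Real.Gamma (x + a) / (Real.Gamma x * x ^ a)) atTop (nhds 1) := by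
  have key : ∀ (k : ℕ) (s : ℝ), 0 ≤ s → s < 1 →
      Tendsto (fun x : ℝ => Real.Gamma (x + (s + k)) / (Real.Gamma x * x ^ (s + k)))
        atTop (nhds 1) := by
    intro k
    induction k with
    | zero =>
      intro s hs0 hs1
      rcases eq_or_lt_of_le hs0 with h0 | h0
      · refine tendsto_const_nhds.congr' ?_
        filter_upwards [eventually_gt_atTop 0] with x hx
        rw [← h0]
        simp [Real.rpow_zero, div_self (Real.Gamma_pos_of_pos hx).ne']
      · simpa using gamma_ratio_base h0 hs1
    | succ k ih =>
      intro s hs0 hs1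
      have := gamma_ratio_step (by positivity) (ih s hs0 hs1)
      refine this.congr ?_
      intro x
      push_cast
      ring_nf
  have hfloor : (a - ⌊a⌋₊) + (⌊a⌋₊ : ℝ) = a := by ring
  have h1 : 0 ≤ a - ⌊a⌋₊ := by
    have := Nat.floor_le ha; linarith
  have h2 : a - ⌊a⌋₊ < 1 := by
    have := Nat.lt_floor_add_one a; linarith
  simpa [hfloor] using key ⌊a⌋₊ (a - ⌊a⌋₊) h1 h2

lemma div_add_tendsto_one (a : ℝ) : Tendsto (fun x : ℝ => x / (x + a)) atTop (nhds 1) := by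
  have hd : Tendsto (fun x : ℝ => 1 - a / (x + a)) atTop (nhds 1) := by
    have := Tendsto.div_atTop (tendsto_const_nhds (x := a))
      (tendsto_atTop_add_const_right atTop a tendsto_id)
    simpa using ((tendsto_const_nhds : Tendsto (fun _ : ℝ => (1:ℝ)) atTop _).sub this)
  refine hd.congr' ?_
  filter_upwards [eventually_gt_atTop 0, eventually_gt_atTop (-a)] with x hx hx2
  have : x + a ≠ 0 := by linarith
  field_simp
  ring

lemma gamma_rpow_ratio {a : ℝ} (ha : 0 < a) :
    Tendsto (fun x : ℝ => (Real.Gamma (x + a) / Real.Gamma x) ^ (1 / a) / x) atTop (nhds 1) := by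
  have h : Tendsto (fun x : ℝ => (Real.Gamma (x + a) / (Real.Gamma x * x ^ a)) ^ (1/a))
      atTop (nhds ((1:ℝ) ^ (1/a))) := (gamma_ratio_tendsto ha.le).rpow_const (Or.inl one_ne_zero)
  rw [Real.one_rpow] at h
  refine h.congr' ?_
  filter_upwards [eventually_gt_atTop 0] with x hx
  have hG : 0 < Real.Gamma x := Real.Gamma_pos_of_pos hx
  have hGa : 0 < Real.Gamma (x + a) := Real.Gamma_pos_of_pos (by linarith)
  have hxa : 0 < x ^ a := Real.rpow_pos_of_pos hx a
  rw [show Real.Gamma (x+a) / (Real.Gamma x * x ^ a)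
      = Real.Gamma (x+a) / Real.Gamma x / x ^ a from by rw [div_div],
    Real.div_rpow (by positivity) hxa.le, ← Real.rpow_mul hx.le, mul_one_div,
    div_self ha.ne', Real.rpow_one]

lemma gamma_nat_ratio {a : ℝ} (ha : 0 < a) (m : ℕ) :
    Tendsto (fun x : ℝ => x ^ m * Real.Gamma (x + a) / Real.Gamma (x + a + m))
      atTop (nhds 1) := by
  have h1 : Tendsto (fun x : ℝ => Real.Gamma (x + a + m) /
      (Real.Gamma (x + a) * (x + a) ^ (m:ℝ))) atTop (nhds 1) :=
    (gamma_ratio_tendsto (a := (m:ℝ)) (by positivity)).comp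
      (tendsto_atTop_add_const_right atTop a tendsto_id)
  have h2 : Tendsto (fun x : ℝ => (x / (x + a)) ^ (m:ℝ)) atTop (nhds ((1:ℝ) ^ (m:ℝ))) :=
    (div_add_tendsto_one a).rpow_const (Or.inl one_ne_zero)
  rw [Real.one_rpow] at h2
  have h3 := h2.mul (h1.inv₀ one_ne_zero)
  norm_num at h3
  refine h3.congr' ?_
  filter_upwards [eventually_gt_atTop 0] with x hx
  have hxa : 0 < x + a := by linarith
  have hGa : 0 < Real.Gamma (x + a) := Real.Gamma_pos_of_pos hxa
  have hGam : 0 < Real.Gamma (x + a + m) := Real.Gamma_pos_of_pos (by positivity)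
  have hp : 0 < (x + a) ^ (m:ℝ) := Real.rpow_pos_of_pos hxa _
  rw [div_pow]
  field_simp

lemma const_id (ν : ℝ) (hν : 0 < ν) (n d : ℕ) :
    Real.Gamma (2*ν + 2*n + d) * Real.Gamma ν /
      (Real.Gamma (2*ν) * Real.Gamma (ν + d/2 + n))
      = 2 ^ (d + 2*n) * Real.Gamma ((d+1)/2 + ν + n) / Real.Gamma (ν + 1/2) := by
  have hπ : (0:ℝ) < √π := Real.sqrt_pos.mpr Real.pi_pos
  have hs1pos : (0:ℝ) < ν + d/2 + n := by positivity
  have hcast : (2:ℝ) ^ ((d:ℝ) + 2*(n:ℝ)) = 2 ^ (d + 2*n) := by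
    rw [← Real.rpow_natCast 2 (d + 2*n)]; push_cast; ring_nf
  have hpow : (2:ℝ) ^ (1 - 2*ν) = 2 ^ (1 - 2*(ν + d/2 + n)) * 2 ^ (d + 2*n) := by
    rw [← hcast, ← Real.rpow_add two_pos]; ring_nf
  have h2s : Real.Gamma (2*(ν + d/2 + n)) =
      Real.Gamma (ν + d/2 + n) * Real.Gamma (ν + d/2 + n + 1/2) /
        (2 ^ (1 - 2*(ν + d/2 + n)) * √π) := by
    rw [eq_div_iff (mul_ne_zero (Real.rpow_pos_of_pos two_pos _).ne' hπ.ne'), ← mul_assoc,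
      ← Real.Gamma_mul_Gamma_add_half]
  have h2ν : Real.Gamma (2*ν) =
      Real.Gamma ν * Real.Gamma (ν + 1/2) / (2 ^ (1 - 2*ν) * √π) := by
    rw [eq_div_iff (mul_ne_zero (Real.rpow_pos_of_pos two_pos _).ne' hπ.ne'), ← mul_assoc,
      ← Real.Gamma_mul_Gamma_add_half]
  have harg : 2*ν + 2*(n:ℝ) + (d:ℝ) = 2*(ν + d/2 + n) := by push_cast; ring
  have harg2 : ((d:ℝ)+1)/2 + ν + n = ν + d/2 + n + 1/2 := by push_cast; ring
  rw [harg, harg2, h2s, h2ν, hpow]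
  have g1 : Real.Gamma (ν + d/2 + n) ≠ 0 := (Real.Gamma_pos_of_pos hs1pos).ne'
  have g2 : Real.Gamma (ν + d/2 + n + 1/2) ≠ 0 :=
    (Real.Gamma_pos_of_pos (by positivity)).ne'
  have g3 : Real.Gamma ν ≠ 0 := (Real.Gamma_pos_of_pos hν).ne'
  have g4 : Real.Gamma (ν + 1/2) ≠ 0 := (Real.Gamma_pos_of_pos (by positivity)).ne'
  have g5 : (2:ℝ) ^ (1 - 2*(ν + d/2 + n)) ≠ 0 := (Real.rpow_pos_of_pos two_pos _).ne'
  field_simp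

theorem stmt_7 (ν β : ℝ) (hν : 0 < ν) (hβ : 0 < β) (n d : ℕ) :
    Filter.Tendsto
      (fun μ : ℝ =>
        Real.Gamma (2 * ν + 2 * n + d) * Real.Gamma (μ + 2 * ν + 1) * Real.Gamma ν *
          gwDelta ν μ β ^ (2 * n + d) /
        ((n.factorial : ℝ) * Real.Gamma (2 * ν) * Real.Gamma (μ + 2 * ν + 2 * n + d + 1) *
          Real.Gamma (ν + d / 2 + n)))
      Filter.atTop
      (nhds (2 ^ (d + 2 * n) * Real.Gamma ((d + 1) / 2 + ν) *
        (Real.Gamma ((d + 1) / 2 + ν + n) / Real.Gamma ((d + 1) / 2 + ν)) * β ^ (d + 2 * n) /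
        ((n.factorial : ℝ) * Real.Gamma (ν + 1 / 2)))) := by
  simp only [gwDelta]
  set a : ℝ := 2 * ν + 1 with ha_def
  have ha : 0 < a := by positivity
  set m : ℕ := 2 * n + d with hm_def
  set K : ℝ := Real.Gamma (2 * ν + 2 * n + d) * Real.Gamma ν * β ^ m /
    ((n.factorial : ℝ) * Real.Gamma (2 * ν) * Real.Gamma (ν + d / 2 + n)) with hK_def
  have hTend : Tendsto
      (fun μ : ℝ => K * (((Real.Gamma (μ + a) / Real.Gamma μ) ^ (1 / a) / μ) ^ m *
        (μ ^ m * Real.Gamma (μ + a) / Real.Gamma (μ + a + m)))) atTop (nhds (K * (1 ^ m * 1))) :=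
    tendsto_const_nhds.mul (((gamma_rpow_ratio ha).pow m).mul (gamma_nat_ratio ha m))
  rw [one_pow, mul_one, mul_one] at hTend
  have hKval : K = 2 ^ (d + 2 * n) * Real.Gamma ((d + 1) / 2 + ν) *
      (Real.Gamma ((d + 1) / 2 + ν + n) / Real.Gamma ((d + 1) / 2 + ν)) * β ^ (d + 2 * n) /
      ((n.factorial : ℝ) * Real.Gamma (ν + 1 / 2)) := by
    have hGd : Real.Gamma ((d + 1) / 2 + ν) ≠ 0 :=
      (Real.Gamma_pos_of_pos (by positivity)).ne'
    rw [show (2:ℝ) ^ (d + 2 * n) * Real.Gamma ((d + 1) / 2 + ν) *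
        (Real.Gamma ((d + 1) / 2 + ν + n) / Real.Gamma ((d + 1) / 2 + ν)) *
        β ^ (d + 2 * n) =
        2 ^ (d + 2 * n) * Real.Gamma ((d + 1) / 2 + ν + n) * β ^ (d + 2 * n) from by
          field_simp]
    have hc := const_id ν hν n d
    have hβm : β ^ m = β ^ (d + 2 * n) := by rw [hm_def]; ring_nf
    have hfac : ((n.factorial : ℝ)) ≠ 0 := Nat.cast_ne_zero.mpr n.factorial_ne_zero
    have hG2ν : Real.Gamma (2 * ν) ≠ 0 := (Real.Gamma_pos_of_pos (by positivity)).ne'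
    have hGs : Real.Gamma (ν + d / 2 + n) ≠ 0 :=
      (Real.Gamma_pos_of_pos (by positivity)).ne'
    have hGh : Real.Gamma (ν + 1 / 2) ≠ 0 := (Real.Gamma_pos_of_pos (by positivity)).ne'
    rw [hK_def, hβm]
    field_simp at hc ⊢
    linear_combination hc
  rw [← hKval]
  refine hTend.congr' ?_
  filter_upwards [eventually_gt_atTop 0] with μ hμ
  have hμa : 0 < μ + a := by positivity
  have hGμa : 0 < Real.Gamma (μ + a) := Real.Gamma_pos_of_pos hμa
  have hGm : 0 < Real.Gamma (μ + a + m) := Real.Gamma_pos_of_pos (by positivity)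
  have harg1 : μ + 2 * ν + 1 = μ + a := by rw [ha_def]; ring
  have harg2 : μ + 2 * ν + 2 * (n:ℝ) + (d:ℝ) + 1 = μ + a + (m:ℝ) := by
    rw [ha_def, hm_def]; push_cast; ring
  have hexp : 1 / (1 + 2 * ν) = 1 / a := by rw [ha_def]; ring_nf
  rw [harg1, harg2, hexp]
  set Q : ℝ := (Real.Gamma (μ + a) / Real.Gamma μ) ^ (1 / a) with hQ
  have hfac : ((n.factorial : ℝ)) ≠ 0 := Nat.cast_ne_zero.mpr n.factorial_ne_zero
  have hG2ν : Real.Gamma (2 * ν) ≠ 0 := (Real.Gamma_pos_of_pos (by positivity)).ne'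
  have hGs : Real.Gamma (ν + d / 2 + n) ≠ 0 := (Real.Gamma_pos_of_pos (by positivity)).ne'
  rw [hK_def, mul_pow, div_pow]
  field_simp
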